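/- The map f : ℕ \ {0} → ℝ defined by f(n) = (n!)^(1/n) / n is strictly decreasing and tends to 1/e as n → ∞; consequently (n!)^(1/n) > n/e for all positive integers n. -/

import Mathlib

open Filter

section Aux

open Real

noncomputable def F (n : ℕ) : ℝ := (Nat.factorial n : ℝ) ^ ((1 : ℝ) / n) / n

lemma F_pos {n : ℕ} (hn : 1 ≤ n) : 0 < F n := by
  have hn0 : (0:ℝ) < n := by exact_mod_cast hn
  have : (0:ℝ) < (Nat.factorial n : ℝ) := by exact_mod_cast n.factorial_pos
  unfold F; positivity

lemma log_F (n : ℕ) (hn : 1 ≤ n) :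
    Real.log (F n) = Real.log (Nat.factorial n) / n - Real.log n := by
  have hn0 : (0:ℝ) < n := by exact_mod_cast hn
  have hf : (0:ℝ) < (Nat.factorial n : ℝ) := by exact_mod_cast n.factorial_pos
  unfold F
  rw [Real.log_div (by positivity) (ne_of_gt hn0), Real.log_rpow hf]
  ring

lemma logfact_ge (n : ℕ) (hn : 1 ≤ n) :
    (n : ℝ) * Real.log n - n + 1 ≤ Real.log (Nat.factorial n) := by
  induction n, hn using Nat.le_induction with
  | base => simp
  | succ n hn ih =>
    have hn0 : (0:ℝ) < n := by exact_mod_cast hn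
    have hfs : ((n+1).factorial : ℝ) = (n+1) * n.factorial := by
      rw [Nat.factorial_succ]; push_cast; ring
    have hlog : Real.log ((n+1).factorial) = Real.log (n+1) + Real.log (n.factorial) := by
      rw [hfs, Real.log_mul (by positivity) (by exact_mod_cast n.factorial_pos.ne')]
    have h1 : Real.log ((n+1)/n) ≤ 1/n := by
      have := Real.log_le_sub_one_of_pos (x := ((n:ℝ)+1)/n) (by positivity)
      have : Real.log ((n+1)/n) ≤ ((n:ℝ)+1)/n - 1 := this
      calc Real.log ((n+1)/n) ≤ ((n:ℝ)+1)/n - 1 := this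
        _ = 1/n := by field_simp; ring
    have h2 : Real.log ((n:ℝ)+1) - Real.log n ≤ 1/n := by
      rwa [← Real.log_div (by positivity) (ne_of_gt hn0)]
    have h3 : (n:ℝ) * (1/n) = 1 := by field_simp
    have h4 := mul_le_mul_of_nonneg_left h2 hn0.le
    push_cast [hlog]
    push_cast at ih
    linarith

lemma logfact_le (n : ℕ) (hn : 1 ≤ n) :
    Real.log (Nat.factorial n) ≤ (n : ℝ) * Real.log n - n + 1 + Real.log n := by
  induction n, hn using Nat.le_induction with
  | base => simp
  | succ n hn ih =>
    have hn0 : (0:ℝ) < n := by exact_mod_cast hn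
    have hfs : ((n+1).factorial : ℝ) = (n+1) * n.factorial := by
      rw [Nat.factorial_succ]; push_cast; ring
    have hlog : Real.log ((n+1).factorial) = Real.log (n+1) + Real.log (n.factorial) := by
      rw [hfs, Real.log_mul (by positivity) (by exact_mod_cast n.factorial_pos.ne')]
    have h1 : 1 - ((n:ℝ)+1)⁻¹ * n ≤ Real.log (((n:ℝ)+1)/n) := by
      have := Real.one_sub_inv_le_log_of_pos (x := ((n:ℝ)+1)/n) (by positivity)
      have heq : (((n:ℝ)+1)/n)⁻¹ = n / ((n:ℝ)+1) := by field_simp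
      rw [heq] at this
      calc 1 - ((n:ℝ)+1)⁻¹ * n = 1 - n / ((n:ℝ)+1) := by ring
        _ ≤ _ := this
    have h2 : 1/((n:ℝ)+1) ≤ Real.log ((n:ℝ)+1) - Real.log n := by
      rw [← Real.log_div (by positivity) (ne_of_gt hn0)]
      have : 1 - ((n:ℝ)+1)⁻¹ * n = 1/((n:ℝ)+1) := by field_simp; ring
      linarith [h1, this ▸ h1]
    have h3 : ((n:ℝ)+1) * (1/((n:ℝ)+1)) = 1 := by field_simp
    have h4 := mul_le_mul_of_nonneg_left h2 (by positivity : (0:ℝ) ≤ (n:ℝ)+1)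
    push_cast [hlog]
    push_cast at ih
    linarith

lemma star (n : ℕ) (hn : 1 ≤ n) :
    (n:ℝ) * (n+1) * Real.log n - (n:ℝ)^2 * Real.log (n+1) < Real.log (Nat.factorial n) := by
  have hn0 : (0:ℝ) < n := by exact_mod_cast hn
  have hn1 : (1:ℝ) ≤ n := by exact_mod_cast hn
  have h1 : 1 - ((n:ℝ)+1)⁻¹ * n ≤ Real.log (((n:ℝ)+1)/n) := by
    have := Real.one_sub_inv_le_log_of_pos (x := ((n:ℝ)+1)/n) (by positivity)
    have heq : (((n:ℝ)+1)/n)⁻¹ = n / ((n:ℝ)+1) := by field_simp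
    rw [heq] at this
    calc 1 - ((n:ℝ)+1)⁻¹ * n = 1 - n / ((n:ℝ)+1) := by ring
      _ ≤ _ := this
  have h2 : 1/((n:ℝ)+1) ≤ Real.log ((n:ℝ)+1) - Real.log n := by
    rw [← Real.log_div (by positivity) (ne_of_gt hn0)]
    have e : 1 - ((n:ℝ)+1)⁻¹ * n = 1/((n:ℝ)+1) := by field_simp; ring
    linarith [e ▸ h1]
  have h3 : (n:ℝ)^2 / ((n:ℝ)+1) ≤ (n:ℝ)^2 * (Real.log ((n:ℝ)+1) - Real.log n) := by
    have := mul_le_mul_of_nonneg_left h2 (by positivity : (0:ℝ) ≤ (n:ℝ)^2)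
    calc (n:ℝ)^2 / ((n:ℝ)+1) = (n:ℝ)^2 * (1/((n:ℝ)+1)) := by ring
      _ ≤ _ := this
  have h4 : (n:ℝ) - 1 < (n:ℝ)^2 / ((n:ℝ)+1) := by
    rw [lt_div_iff₀ (by positivity)]
    nlinarith
  have h5 := logfact_ge n hn
  nlinarith

lemma F_step (n : ℕ) (hn : 1 ≤ n) : F (n+1) < F n := by
  have hn0 : (0:ℝ) < n := by exact_mod_cast hn
  have hn10 : (0:ℝ) < (n:ℝ)+1 := by positivity
  have hL : Real.log (F (n+1)) < Real.log (F n) := by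
    rw [log_F n hn, log_F (n+1) (by omega)]
    have hfs : Real.log ((n+1).factorial) = Real.log ((n:ℝ)+1) + Real.log (n.factorial) := by
      have : ((n+1).factorial : ℝ) = ((n:ℝ)+1) * n.factorial := by
        rw [Nat.factorial_succ]; push_cast; ring
      rw [this, Real.log_mul (by positivity) (by exact_mod_cast n.factorial_pos.ne')]
    push_cast [hfs]
    rw [div_sub' (ne_of_gt hn10), div_sub' (ne_of_gt hn0),
      div_lt_div_iff₀ hn10 hn0]
    have := star n hn
    push_cast at this
    nlinarith
  have := Real.exp_lt_exp.mpr hL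
  rwa [Real.exp_log (F_pos (by omega)), Real.exp_log (F_pos hn)] at this

lemma F_anti : ∀ a b : ℕ, 1 ≤ a → a < b → F b < F a := by
  intro a b ha hab
  induction b, hab using Nat.le_induction with
  | base => exact F_step a ha
  | succ n hn ih => exact (F_step n (by omega)).trans ih

lemma G_tendsto :
    Tendsto (fun n : ℕ => Real.log (Nat.factorial n) / n - Real.log n) atTop (nhds (-1)) := by
  have hlow : Tendsto (fun n : ℕ => -1 + 1/(n:ℝ)) atTop (nhds (-1)) := by
    simpa using tendsto_const_nhds.add (tendsto_one_div_atTop_nhds_zero_nat (𝕜 := ℝ))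
  have hlogdiv : Tendsto (fun n : ℕ => Real.log n / (n:ℝ)) atTop (nhds 0) := by
    have := (Real.tendsto_pow_log_div_mul_add_atTop 1 0 1 one_ne_zero).comp
      tendsto_natCast_atTop_atTop
    simpa [Function.comp_def] using this
  have hup : Tendsto (fun n : ℕ => -1 + (1 + Real.log n)/(n:ℝ)) atTop (nhds (-1)) := by
    have h2 : Tendsto (fun n : ℕ => (1 + Real.log n)/(n:ℝ)) atTop (nhds 0) := by
      have := tendsto_one_div_atTop_nhds_zero_nat.add hlogdiv
      simpa [add_div] using this
    simpa using tendsto_const_nhds.add h2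
  refine tendsto_of_tendsto_of_tendsto_of_le_of_le' hlow hup ?_ ?_
  · filter_upwards [eventually_ge_atTop 1] with n hn
    have hn0 : (0:ℝ) < n := by exact_mod_cast hn
    have h := logfact_ge n hn
    have e : (-1 + 1/(n:ℝ) + Real.log n) * n = (n:ℝ) * Real.log n - n + 1 := by
      field_simp; ring
    have : (-1 + 1/(n:ℝ) + Real.log n) ≤ Real.log (Nat.factorial n) / n := by
      rw [le_div_iff₀ hn0]; linarith [e ▸ h]
    linarith
  · filter_upwards [eventually_ge_atTop 1] with n hn
    have hn0 : (0:ℝ) < n := by exact_mod_cast hn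
    have h := logfact_le n hn
    have e : (-1 + (1 + Real.log n)/(n:ℝ) + Real.log n) * n
        = (n:ℝ) * Real.log n - n + 1 + Real.log n := by
      field_simp; ring
    have : Real.log (Nat.factorial n) / n ≤ (-1 + (1 + Real.log n)/(n:ℝ) + Real.log n) := by
      rw [div_le_iff₀ hn0]; linarith [e ▸ h]
    linarith

lemma F_tendsto : Tendsto F atTop (nhds (1 / Real.exp 1)) := by
  have h := (Real.continuous_exp.tendsto (-1)).comp G_tendsto
  have heq : (fun n : ℕ => Real.exp (Real.log (Nat.factorial n) / n - Real.log n))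
      =ᶠ[atTop] F := by
    filter_upwards [eventually_ge_atTop 1] with n hn
    rw [← log_F n hn, Real.exp_log (F_pos hn)]
  have := h.congr' heq
  simpa [Real.exp_neg, one_div] using this

lemma F_gt (n : ℕ) (hn : 1 ≤ n) : 1 / Real.exp 1 < F n := by
  have h1 : 1 / Real.exp 1 ≤ F (n+1) := by
    refine le_of_tendsto F_tendsto ?_
    filter_upwards [eventually_ge_atTop (n+1)] with m hm
    rcases eq_or_lt_of_le hm with h | h
    · rw [h]
    · exact (F_anti (n+1) m (by omega) h).le
  exact h1.trans_lt (F_step n hn)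

end Aux

/-- The map `n ↦ (n!)^(1/n) / n` is strictly decreasing on positive integers,
tends to `1/e`, and consequently `(n!)^(1/n) > n/e` for all positive `n`. -/
theorem stmt0 :
    StrictAntiOn (fun n : ℕ => (Nat.factorial n : ℝ) ^ ((1 : ℝ) / n) / n)
      {n : ℕ | 1 ≤ n} ∧
    Tendsto (fun n : ℕ => (Nat.factorial n : ℝ) ^ ((1 : ℝ) / n) / n) atTop
      (nhds (1 / Real.exp 1)) ∧
    ∀ n : ℕ, 1 ≤ n → (Nat.factorial n : ℝ) ^ ((1 : ℝ) / n) > (n : ℝ) / Real.exp 1 := by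
  have hF : (fun n : ℕ => (Nat.factorial n : ℝ) ^ ((1 : ℝ) / n) / n) = F := rfl
  refine ⟨?_, ?_, ?_⟩
  · rw [hF]
    intro a ha b hb hab
    exact F_anti a b ha hab
  · rw [hF]; exact F_tendsto
  · intro n hn
    have hn0 : (0:ℝ) < n := by exact_mod_cast hn
    have h := F_gt n hn
    unfold F at h
    rw [div_lt_div_iff₀ (Real.exp_pos 1) hn0] at h
    rw [gt_iff_lt, div_lt_iff₀ (Real.exp_pos 1)]
    linarith
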